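/- arXiv:2510.22044 — 3 statements merged into one kernel-verified Lean document; each statement's English description precedes it below -/
import Mathlib

section
/- Let A be an m×d real matrix (m ≤ d) such that the Gram matrix G := A Aᵀ is invertible, and set Π := I_d − Aᵀ G⁻¹ A. Then Q := √2·Π is the unique solution of the constrained least-squares problem min ‖√2·I_d − Q̄‖_F over all d×d real matrices Q̄ satisfying Q̄ Aᵀ = 0; that is, Q Aᵀ = 0, for every d×d matrix Q̄ with Q̄ Aᵀ = 0 one has ‖√2·I_d − Q‖_F ≤ ‖√2·I_d − Q̄‖_F, and equality holds only if Q̄ = Q. -/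
open Matrix

/-- Frobenius norm of a square real matrix. -/
noncomputable def frobNorm {d : ℕ} (M : Matrix (Fin d) (Fin d) ℝ) : ℝ :=
  Real.sqrt (∑ i, ∑ j, (M i j) ^ 2)

private lemma frob_sq_nonneg {d : ℕ} (M : Matrix (Fin d) (Fin d) ℝ) :
    0 ≤ ∑ i, ∑ j, (M i j) ^ 2 :=
  Finset.sum_nonneg fun _ _ => Finset.sum_nonneg fun _ _ => sq_nonneg _

private lemma sum_split {d : ℕ} (X R : Matrix (Fin d) (Fin d) ℝ)
    (h : ∑ i, ∑ j, X i j * R i j = 0) :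
    ∑ i, ∑ j, ((X + R) i j) ^ 2 =
      (∑ i, ∑ j, (X i j) ^ 2) + ∑ i, ∑ j, (R i j) ^ 2 := by
  have : ∀ i j, ((X + R) i j) ^ 2 = (X i j)^2 + (R i j)^2 + 2 * (X i j * R i j) := by
    intro i j; simp [Matrix.add_apply]; ring
  simp only [this, Finset.sum_add_distrib, ← Finset.mul_sum, h]
  ring

/-- The diffusion part of Proposition 4.1: `Q = √2 Π` is the unique minimizer of the
Frobenius distance to `√2 I` among matrices annihilating `Aᵀ`. -/
theorem olla_diffusion_least_squares
    {m d : ℕ} (hmd : m ≤ d) (A : Matrix (Fin m) (Fin d) ℝ)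
    (hG : IsUnit (A * Aᵀ)) :
    (Real.sqrt 2 • ((1 : Matrix (Fin d) (Fin d) ℝ) - Aᵀ * (A * Aᵀ)⁻¹ * A)) * Aᵀ = 0 ∧
    ∀ Q' : Matrix (Fin d) (Fin d) ℝ, Q' * Aᵀ = 0 →
      frobNorm (Real.sqrt 2 • (1 : Matrix (Fin d) (Fin d) ℝ) -
          Real.sqrt 2 • ((1 : Matrix (Fin d) (Fin d) ℝ) - Aᵀ * (A * Aᵀ)⁻¹ * A)) ≤
        frobNorm (Real.sqrt 2 • (1 : Matrix (Fin d) (Fin d) ℝ) - Q') ∧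
      (frobNorm (Real.sqrt 2 • (1 : Matrix (Fin d) (Fin d) ℝ) -
          Real.sqrt 2 • ((1 : Matrix (Fin d) (Fin d) ℝ) - Aᵀ * (A * Aᵀ)⁻¹ * A)) =
        frobNorm (Real.sqrt 2 • (1 : Matrix (Fin d) (Fin d) ℝ) - Q') →
        Q' = Real.sqrt 2 • ((1 : Matrix (Fin d) (Fin d) ℝ) - Aᵀ * (A * Aᵀ)⁻¹ * A)) := by
  set G := A * Aᵀ with hGdef
  set P : Matrix (Fin d) (Fin d) ℝ := Aᵀ * G⁻¹ * A with hPdef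
  have hdet : IsUnit G.det := (Matrix.isUnit_iff_isUnit_det G).mp hG
  have hGinv : G⁻¹ * G = 1 := Matrix.nonsing_inv_mul G hdet
  have hPA : P * Aᵀ = Aᵀ := by
    calc P * Aᵀ = Aᵀ * (G⁻¹ * G) := by rw [hPdef, hGdef]; simp only [Matrix.mul_assoc]
    _ = Aᵀ := by rw [hGinv, Matrix.mul_one]
  have hPsym : Pᵀ = P := by
    have hGsym : Gᵀ = G := by rw [hGdef, Matrix.transpose_mul, Matrix.transpose_transpose]
    rw [hPdef, Matrix.transpose_mul, Matrix.transpose_mul, Matrix.transpose_nonsing_inv,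
      hGsym, Matrix.transpose_transpose, Matrix.mul_assoc]
  have hQA : (Real.sqrt 2 • ((1 : Matrix (Fin d) (Fin d) ℝ) - P)) * Aᵀ = 0 := by
    rw [Matrix.smul_mul, Matrix.sub_mul, Matrix.one_mul, hPA, sub_self, smul_zero]
  refine ⟨hQA, fun Q' hQ' => ?_⟩
  set R : Matrix (Fin d) (Fin d) ℝ := Real.sqrt 2 • ((1 : Matrix (Fin d) (Fin d) ℝ) - P) - Q'
    with hRdef
  have hRA : R * Aᵀ = 0 := by rw [hRdef, Matrix.sub_mul, hQA, hQ', sub_self]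
  have hRP : R * P = 0 := by
    rw [hPdef, ← Matrix.mul_assoc, ← Matrix.mul_assoc, hRA, Matrix.zero_mul, Matrix.zero_mul]
  -- cross term
  have hcross : ∑ i, ∑ j, (Real.sqrt 2 • P) i j * R i j = 0 := by
    have hPRt : P * Rᵀ = 0 := by
      have : (R * P)ᵀ = 0 := by rw [hRP, Matrix.transpose_zero]
      rwa [Matrix.transpose_mul, hPsym] at this
    have : ∀ i, ∑ j, P i j * R i j = (P * Rᵀ) i i := by
      intro i; rw [Matrix.mul_apply]; simp [Matrix.transpose_apply]
    calc ∑ i, ∑ j, (Real.sqrt 2 • P) i j * R i j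
        = Real.sqrt 2 * ∑ i, ∑ j, P i j * R i j := by
          simp [Finset.mul_sum, Matrix.smul_apply, smul_eq_mul, mul_assoc]
      _ = Real.sqrt 2 * ∑ i, (P * Rᵀ) i i := by rw [Finset.sum_congr rfl fun i _ => this i]
      _ = 0 := by rw [hPRt]; simp
  have hdecomp : Real.sqrt 2 • (1 : Matrix (Fin d) (Fin d) ℝ) - Q'
      = Real.sqrt 2 • P + R := by
    rw [hRdef]; rw [smul_sub]; abel
  have hdiff : Real.sqrt 2 • (1 : Matrix (Fin d) (Fin d) ℝ)
      - Real.sqrt 2 • ((1 : Matrix (Fin d) (Fin d) ℝ) - P) = Real.sqrt 2 • P := by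
    rw [smul_sub]; abel
  have hsum : ∑ i, ∑ j, ((Real.sqrt 2 • P + R) i j) ^ 2
      = (∑ i, ∑ j, ((Real.sqrt 2 • P) i j) ^ 2) + ∑ i, ∑ j, (R i j) ^ 2 :=
    sum_split _ _ hcross
  constructor
  · rw [frobNorm, frobNorm, hdiff, hdecomp, hsum]
    exact Real.sqrt_le_sqrt (by linarith [frob_sq_nonneg R])
  · intro heq
    rw [frobNorm, frobNorm, hdiff, hdecomp] at heq
    have h1 : ∑ i, ∑ j, ((Real.sqrt 2 • P) i j) ^ 2
        = ∑ i, ∑ j, ((Real.sqrt 2 • P + R) i j) ^ 2 :=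
      (Real.sqrt_inj (frob_sq_nonneg _) (frob_sq_nonneg _)).mp heq
    have hR0 : ∑ i, ∑ j, (R i j) ^ 2 = 0 := by rw [hsum] at h1; linarith
    have hRz : R = 0 := by
      ext i j
      have hi := (Finset.sum_eq_zero_iff_of_nonneg
        (fun i _ => Finset.sum_nonneg fun j _ => sq_nonneg (R i j))).mp hR0 i
        (Finset.mem_univ i)
      have hj := (Finset.sum_eq_zero_iff_of_nonneg
        (fun j _ => sq_nonneg (R i j))).mp hi j (Finset.mem_univ j)
      simpa using pow_eq_zero_iff (n := 2) (by norm_num) |>.mp hj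
    have := hRdef ▸ hRz
    have : Q' = Real.sqrt 2 • ((1 : Matrix (Fin d) (Fin d) ℝ) - P) := by
      have h := sub_eq_zero.mp this
      exact h.symm
    exact this
end

section
/- (Recovery map via the implicit function theorem) Let h : ℝ^d → ℝ^m be twice continuously differentiable, let Σ := h⁻¹({0}) be nonempty and compact, and assume the Jacobian Dh(y) has full row rank for every y ∈ Σ. Then there exist δ > 0 and r > 0 such that for every y ∈ Σ and every p ∈ ℝ^m with ‖p‖₂ < δ there is a unique L ∈ ℝ^m with ‖L‖₂ < r satisfying h(y + Dh(y)ᵀ L) = p; moreover, for p = 0 this unique L equals 0. -/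
open Metric ContinuousLinearMap Set
open scoped RealInnerProductSpace

set_option maxHeartbeats 1000000 in
/-- Recovery map via the implicit function theorem (core of Theorem C.3): there are
`δ, r > 0` such that for every `y ∈ Σ = h⁻¹(0)` and every `p` with `‖p‖ < δ` there is a
unique `L` with `‖L‖ < r` and `h(y + Dh(y)ᵀ L) = p`; for `p = 0` this unique `L` is `0`. -/
theorem recovery_map
    {d m : ℕ} (h : EuclideanSpace ℝ (Fin d) → EuclideanSpace ℝ (Fin m))
    (hsmooth : ContDiff ℝ 2 h)
    (S : Set (EuclideanSpace ℝ (Fin d))) (hS : S = h ⁻¹' {0})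
    (hne : S.Nonempty) (hcomp : IsCompact S)
    (hrank : ∀ y ∈ S, Function.Surjective (fderiv ℝ h y)) :
    ∃ δ > (0 : ℝ), ∃ r > (0 : ℝ),
      (∀ y ∈ S, ∀ p : EuclideanSpace ℝ (Fin m), ‖p‖ < δ →
        ∃! L : EuclideanSpace ℝ (Fin m), ‖L‖ < r ∧
          h (y + ContinuousLinearMap.adjoint (fderiv ℝ h y) L) = p) ∧
      (∀ y ∈ S, ∀ L : EuclideanSpace ℝ (Fin m), ‖L‖ < r →
        h (y + ContinuousLinearMap.adjoint (fderiv ℝ h y) L) = 0 → L = 0) := by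
  classical
  have hy0 : ∀ y ∈ S, h y = 0 := fun y hy => by rw [hS] at hy; exact hy
  -- trivial case: m = 0
  rcases subsingleton_or_nontrivial (EuclideanSpace ℝ (Fin m)) with hsub | hnt
  · refine ⟨1, one_pos, 1, one_pos, ?_, ?_⟩
    · intro y hy p _
      refine ⟨0, ⟨by simpa using one_pos, ?_⟩, fun L _ => Subsingleton.elim _ _⟩
      have hp : p = 0 := Subsingleton.elim _ _
      rw [hp, map_zero, add_zero]
      exact hy0 y hy
    · intro y _ L _ _
      exact Subsingleton.elim _ _
  -- notation
  set A : (EuclideanSpace ℝ (Fin d)) → ((EuclideanSpace ℝ (Fin m)) →L[ℝ] (EuclideanSpace ℝ (Fin d))) := fun y => ContinuousLinearMap.adjoint (fderiv ℝ h y) with hAdef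
  set B : (EuclideanSpace ℝ (Fin d)) → ((EuclideanSpace ℝ (Fin m)) →L[ℝ] (EuclideanSpace ℝ (Fin m))) := fun y => (fderiv ℝ h y).comp (A y) with hBdef
  have hd1 : (1 : WithTop ℕ∞) ≤ 2 := one_le_two
  have hf1 : Continuous fun y => fderiv ℝ h y := hsmooth.continuous_fderiv (by norm_num)
  have hAcont : Continuous A :=
    (ContinuousLinearMap.adjoint (𝕜 := ℝ) (E := EuclideanSpace ℝ (Fin d)) (F := EuclideanSpace ℝ (Fin m))).continuous.comp hf1
  have hBcont : Continuous B := hf1.clm_comp hAcont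
  -- bijectivity of B y for y ∈ S
  have hBbij : ∀ y ∈ S, Function.Bijective (B y) := by
    intro y hy
    have key : ∀ L, (B y) L = 0 → L = 0 := by
      intro L hL0
      have h1 : (A y) L = 0 := by
        have h2 : ⟪(A y) L, (A y) L⟫ = 0 := by
          rw [hAdef, ContinuousLinearMap.adjoint_inner_left]
          have h3 : fderiv ℝ h y ((A y) L) = 0 := hL0
          rw [h3, inner_zero_right]
        exact inner_self_eq_zero.mp h2
      obtain ⟨x, hx⟩ := hrank y hy L
      have h4 : ⟪L, fderiv ℝ h y x⟫ = 0 := by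
        rw [← ContinuousLinearMap.adjoint_inner_left]
        have h1' : (ContinuousLinearMap.adjoint (fderiv ℝ h y)) L = 0 := h1
        rw [h1', inner_zero_left]
      rw [hx] at h4
      exact inner_self_eq_zero.mp h4
    have hinj : Function.Injective (B y) := by
      intro a b hab
      exact sub_eq_zero.mp (key (a - b) (by rw [map_sub, hab, sub_self]))
    exact ⟨hinj, LinearMap.injective_iff_surjective.mp hinj⟩
  -- the continuous linear equivalences
  have hker : ∀ y ∈ S, LinearMap.ker (B y : EuclideanSpace ℝ (Fin m) →ₗ[ℝ] EuclideanSpace ℝ (Fin m)) = ⊥ :=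
    fun y hy => (LinearMap.ker_eq_bot (f := (B y : EuclideanSpace ℝ (Fin m) →ₗ[ℝ] EuclideanSpace ℝ (Fin m)))).mpr (hBbij y hy).1
  have hrg : ∀ y ∈ S, LinearMap.range (B y : EuclideanSpace ℝ (Fin m) →ₗ[ℝ] EuclideanSpace ℝ (Fin m)) = ⊤ :=
    fun y hy => (LinearMap.range_eq_top (f := (B y : EuclideanSpace ℝ (Fin m) →ₗ[ℝ] EuclideanSpace ℝ (Fin m)))).mpr (hBbij y hy).2
  set e : ∀ y ∈ S, ((EuclideanSpace ℝ (Fin m)) ≃L[ℝ] (EuclideanSpace ℝ (Fin m))) := fun y hy =>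
    ContinuousLinearEquiv.ofBijective (B y) (hker y hy) (hrg y hy) with hedef
  have hecoe : ∀ y (hy : y ∈ S), ((e y hy : (EuclideanSpace ℝ (Fin m)) →L[ℝ] (EuclideanSpace ℝ (Fin m)))) = B y := fun y hy =>
    ContinuousLinearEquiv.coe_ofBijective _ _ _
  -- Ring.inverse relation
  have hRinv : ∀ y (hy : y ∈ S),
      Ring.inverse (B y) = ((e y hy).symm : (EuclideanSpace ℝ (Fin m)) →L[ℝ] (EuclideanSpace ℝ (Fin m))) := by
    intro y hy
    rw [← hecoe y hy]
    rw [ContinuousLinearMap.ringInverse_eq_inverse, ContinuousLinearMap.inverse_equiv]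
  -- bound on inverses
  obtain ⟨c0', hc0'⟩ : ∃ C, ∀ y ∈ S, ‖Ring.inverse (B y)‖ ≤ C := by
    apply hcomp.exists_bound_of_continuousOn
    intro y hy
    have hU : IsUnit (B y) := by
      rw [← hecoe y hy]
      exact ⟨(ContinuousLinearEquiv.unitsEquiv ℝ (EuclideanSpace ℝ (Fin m))).symm (e y hy), rfl⟩
    obtain ⟨u, hu⟩ := hU
    have := (NormedRing.inverse_continuousAt u)
    rw [hu] at this
    exact (this.comp hBcont.continuousAt).continuousWithinAt
  set c0 : ℝ := max c0' 1 with hc0def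
  have hc0pos : (0:ℝ) < c0 := lt_of_lt_of_le one_pos (le_max_right _ _)
  have hc0 : ∀ y (hy : y ∈ S), ‖((e y hy).symm : (EuclideanSpace ℝ (Fin m)) →L[ℝ] (EuclideanSpace ℝ (Fin m)))‖ ≤ c0 := by
    intro y hy
    rw [← hRinv y hy]
    exact le_trans (hc0' y hy) (le_max_left _ _)
  -- bound on the derivative
  obtain ⟨M', hM'⟩ : ∃ C, ∀ y ∈ S, ‖fderiv ℝ h y‖ ≤ C :=
    hcomp.exists_bound_of_continuousOn hf1.continuousOn
  set M : ℝ := max M' 1 with hMdef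
  have hMpos : (0:ℝ) < M := lt_of_lt_of_le one_pos (le_max_right _ _)
  have hAbound : ∀ y ∈ S, ‖A y‖ ≤ M := by
    intro y hy
    have : ‖A y‖ = ‖fderiv ℝ h y‖ := LinearIsometryEquiv.norm_map _ _
    rw [this]
    exact le_trans (hM' y hy) (le_max_left _ _)
  -- uniform continuity of fderiv on a compact thickening
  set K : Set (EuclideanSpace ℝ (Fin d)) := Metric.cthickening 1 S with hKdef
  have hKcomp : IsCompact K := hcomp.cthickening
  have hUC := hKcomp.uniformContinuousOn_of_continuous hf1.continuousOn
  rw [Metric.uniformContinuousOn_iff] at hUC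
  have hεpos : (0:ℝ) < 1 / (2 * M * c0) := by positivity
  obtain ⟨ρ, hρpos, hρ⟩ := hUC (1 / (2 * M * c0)) hεpos
  -- radii
  set r : ℝ := min ρ 1 / (2 * M) with hrdef
  have hrpos : (0:ℝ) < r := by
    apply div_pos (lt_min hρpos one_pos); positivity
  set δ : ℝ := r / (4 * c0) with hδdef
  have hδpos : (0:ℝ) < δ := by positivity
  set c : NNReal := Real.toNNReal (1 / (2 * c0)) with hcdef
  have hcoe : (c : ℝ) = 1 / (2 * c0) := Real.coe_toNNReal _ (by positivity)
  -- key: the nonlinear map approximates B y on the closed ball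
  have hMr : M * r = min ρ 1 / 2 := by
    rw [hrdef]; field_simp
  have happrox : ∀ y ∈ S,
      ApproximatesLinearOn (fun L => h (y + A y L)) (B y) (closedBall (0:(EuclideanSpace ℝ (Fin m))) r) c := by
    intro y hy
    intro L1 hL1 L2 hL2
    -- mean value inequality for g - B y
    have hmem : ∀ L : (EuclideanSpace ℝ (Fin m)), L ∈ closedBall (0:(EuclideanSpace ℝ (Fin m))) r → y + A y L ∈ K := by
      intro L hL
      apply Metric.mem_cthickening_of_dist_le (y + A y L) y 1 S hy
      rw [dist_eq_norm, add_sub_cancel_left]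
      calc ‖A y L‖ ≤ ‖A y‖ * ‖L‖ := (A y).le_opNorm L
        _ ≤ M * r := by
            apply mul_le_mul (hAbound y hy) _ (norm_nonneg _) (le_of_lt hMpos)
            simpa [mem_closedBall, dist_zero_right] using hL
        _ ≤ 1 := by rw [hMr]; have := min_le_right ρ (1:ℝ); linarith
    have hdist : ∀ L : (EuclideanSpace ℝ (Fin m)), L ∈ closedBall (0:(EuclideanSpace ℝ (Fin m))) r → dist (y + A y L) y < ρ := by
      intro L hL
      rw [dist_eq_norm, add_sub_cancel_left]
      calc ‖A y L‖ ≤ ‖A y‖ * ‖L‖ := (A y).le_opNorm L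
        _ ≤ M * r := by
            apply mul_le_mul (hAbound y hy) _ (norm_nonneg _) (le_of_lt hMpos)
            simpa [mem_closedBall, dist_zero_right] using hL
        _ < ρ := by rw [hMr]; have := min_le_left ρ (1:ℝ); linarith
    have hyK : y ∈ K := Metric.self_subset_cthickening S hy
    have hgd : ∀ L : (EuclideanSpace ℝ (Fin m)), HasFDerivAt (fun L => h (y + A y L))
        ((fderiv ℝ h (y + A y L)).comp (A y)) L := by
      intro L
      have h3 : HasFDerivAt (fun L : (EuclideanSpace ℝ (Fin m)) => y + A y L) (A y) L :=
        ((A y).hasFDerivAt).const_add y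
      exact ((hsmooth.differentiable (by norm_num)) (y + A y L)).hasFDerivAt.comp L h3
    have hbound : ∀ L ∈ closedBall (0:(EuclideanSpace ℝ (Fin m))) r,
        ‖(fderiv ℝ h (y + A y L)).comp (A y) - B y‖ ≤ 1 / (2 * c0) := by
      intro L hL
      have heq : (fderiv ℝ h (y + A y L)).comp (A y) - B y
          = (fderiv ℝ h (y + A y L) - fderiv ℝ h y).comp (A y) := by
        rw [hBdef]; rw [ContinuousLinearMap.sub_comp]
      rw [heq]
      calc ‖(fderiv ℝ h (y + A y L) - fderiv ℝ h y).comp (A y)‖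
          ≤ ‖fderiv ℝ h (y + A y L) - fderiv ℝ h y‖ * ‖A y‖ :=
            ContinuousLinearMap.opNorm_comp_le _ _
        _ ≤ (1 / (2 * M * c0)) * M := by
            apply mul_le_mul _ (hAbound y hy) (norm_nonneg _) (le_of_lt hεpos)
            have := hρ (y + A y L) (hmem L hL) y hyK (hdist L hL)
            rw [dist_eq_norm] at this
            exact le_of_lt this
        _ = 1 / (2 * c0) := by field_simp
    have hconv : Convex ℝ (closedBall (0:(EuclideanSpace ℝ (Fin m))) r) := convex_closedBall _ _
    have := Convex.norm_image_sub_le_of_norm_hasFDerivWithin_le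
      (f := fun L => h (y + A y L) - B y L)
      (f' := fun L => (fderiv ℝ h (y + A y L)).comp (A y) - B y)
      (fun L hL => (((hgd L).sub ((B y).hasFDerivAt)).hasFDerivWithinAt))
      hbound hconv hL2 hL1
    rw [hcoe]
    calc ‖h (y + A y L1) - h (y + A y L2) - (B y) (L1 - L2)‖
        = ‖(h (y + A y L1) - B y L1) - (h (y + A y L2) - B y L2)‖ := by
          rw [map_sub]; congr 1; abel
        _ ≤ 1 / (2 * c0) * ‖L1 - L2‖ := this
  -- estimates on norms of inverses
  have hNpos : ∀ y (hy : y ∈ S), (0:ℝ) < ‖((e y hy).symm : (EuclideanSpace ℝ (Fin m)) →L[ℝ] (EuclideanSpace ℝ (Fin m)))‖ := by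
    intro y hy
    rcases (norm_nonneg (((e y hy).symm : (EuclideanSpace ℝ (Fin m)) →L[ℝ] (EuclideanSpace ℝ (Fin m))))).lt_or_eq with h' | h'
    · exact h'
    · exfalso
      have hz : ((e y hy).symm : (EuclideanSpace ℝ (Fin m)) →L[ℝ] (EuclideanSpace ℝ (Fin m))) = 0 := by
        rwa [eq_comm, norm_eq_zero] at h'
      obtain ⟨z, hznz⟩ := exists_ne (0 : (EuclideanSpace ℝ (Fin m)))
      apply hznz
      have : z = (e y hy).symm ((e y hy) z) := ((e y hy).symm_apply_apply z).symm
      rw [this]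
      have : (e y hy).symm ((e y hy) z) = ((e y hy).symm : (EuclideanSpace ℝ (Fin m)) →L[ℝ] (EuclideanSpace ℝ (Fin m))) ((e y hy) z) := rfl
      rw [this, hz]
      rfl
  have hclt : ∀ y (hy : y ∈ S),
      c < (‖((e y hy).symm : (EuclideanSpace ℝ (Fin m)) →L[ℝ] (EuclideanSpace ℝ (Fin m)))‖₊)⁻¹ := by
    intro y hy
    rw [← NNReal.coe_lt_coe, NNReal.coe_inv, hcoe, coe_nnnorm]
    have h1 := hc0 y hy
    have h2 := hNpos y hy
    rw [one_div]
    have : (2 * c0)⁻¹ < c0⁻¹ := by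
      apply inv_strictAnti₀ hc0pos; linarith
    exact lt_of_lt_of_le this (inv_anti₀ h2 h1)
  -- main existence/uniqueness
  refine ⟨δ, hδpos, r, hrpos, ?_, ?_⟩
  · intro y hy p hp
    have hap := happrox y hy
    rw [← hecoe y hy] at hap
    have hinj : InjOn (fun L => h (y + A y L)) (closedBall (0:(EuclideanSpace ℝ (Fin m))) r) :=
      hap.injOn (Or.inr (hclt y hy))
    -- surjectivity
    have hsub : closedBall (0:(EuclideanSpace ℝ (Fin m))) (r/2) ⊆ closedBall (0:(EuclideanSpace ℝ (Fin m))) r :=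
      closedBall_subset_closedBall (by linarith)
    have hsurj := hap.surjOn_closedBall_of_nonlinearRightInverse
      ((e y hy).toNonlinearRightInverse) (le_of_lt (by linarith : (0:ℝ) < r/2)) hsub
    have hg0 : (fun L => h (y + A y L)) 0 = 0 := by
      simp only [map_zero, add_zero]
      exact hy0 y hy
    have hptgt : p ∈ closedBall ((fun L => h (y + A y L)) 0)
        ((((e y hy).toNonlinearRightInverse.nnnorm : ℝ)⁻¹ - c) * (r/2)) := by
      rw [mem_closedBall, hg0, dist_zero_right]
      have hnn : ((e y hy).toNonlinearRightInverse.nnnorm : ℝ)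
          = ‖((e y hy).symm : (EuclideanSpace ℝ (Fin m)) →L[ℝ] (EuclideanSpace ℝ (Fin m)))‖ := rfl
      have hN := hc0 y hy
      have hNp := hNpos y hy
      have h1 : (1:ℝ)/c0 ≤ ‖((e y hy).symm : (EuclideanSpace ℝ (Fin m)) →L[ℝ] (EuclideanSpace ℝ (Fin m)))‖⁻¹ := by
        rw [one_div]; exact inv_anti₀ hNp hN
      have h2' : ∀ x : ℝ, (1:ℝ)/(2*c0) * (x/2) = x/(4*c0) := by
        intro x; field_simp; ring_nf
      have h2 : (1:ℝ)/(2*c0) * (r/2) = δ := by rw [hδdef]; exact h2' r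
      have h3 : (1:ℝ)/c0 - (c:ℝ) = 1/(2*c0) := by rw [hcoe]; field_simp; ring
      rw [hnn]
      have h4 : (1:ℝ)/(2*c0) ≤ ‖((e y hy).symm : (EuclideanSpace ℝ (Fin m)) →L[ℝ] (EuclideanSpace ℝ (Fin m)))‖⁻¹ - (c:ℝ) := by
        rw [← h3]; linarith [h1]
      calc ‖p‖ ≤ δ := le_of_lt hp
        _ = 1/(2*c0) * (r/2) := h2.symm
        _ ≤ (‖((e y hy).symm : (EuclideanSpace ℝ (Fin m)) →L[ℝ] (EuclideanSpace ℝ (Fin m)))‖⁻¹ - (c:ℝ)) * (r/2) := by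
            apply mul_le_mul_of_nonneg_right h4; linarith
    obtain ⟨L, hLmem, hLeq⟩ := hsurj hptgt
    refine ⟨L, ⟨?_, hLeq⟩, ?_⟩
    · have : ‖L‖ ≤ r/2 := by simpa [mem_closedBall, dist_zero_right] using hLmem
      linarith
    · intro L' ⟨hL'r, hL'eq⟩
      refine hinj ?_ (hsub hLmem) ?_
      · simp only [mem_closedBall, dist_zero_right]
        exact le_of_lt hL'r
      · show h (y + A y L') = h (y + A y L)
        rw [hL'eq]
        exact hLeq.symm
  · intro y hy L hLr hL0
    have hap := happrox y hy
    rw [← hecoe y hy] at hap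
    have hinj : InjOn (fun L => h (y + A y L)) (closedBall (0:(EuclideanSpace ℝ (Fin m))) r) :=
      hap.injOn (Or.inr (hclt y hy))
    refine hinj ?_ ?_ ?_
    · simp only [mem_closedBall, dist_zero_right]; exact le_of_lt hLr
    · simp only [mem_closedBall, dist_zero_right, norm_zero]
      exact le_of_lt hrpos
    · show h (y + A y L) = h (y + A y 0)
      rw [map_zero, add_zero, hL0, hy0 y hy]
end

section
/- Let N : ℝ^d → ℝ^{d×m} be differentiable at a point x₀ with N(x₀)ᵀ N(x₀) = I_m, and set Π(x) := I_d − N(x) N(x)ᵀ. For k ∈ {1,…,d} define the vector field f_k(x) := Π(x) e_k, where e_k is the k-th standard basis vector, and define its Π-divergence at x₀ by (div_Π f_k)(x₀) := tr(Π(x₀) · Df_k(x₀)), where Df_k(x₀) is the Jacobian matrix of f_k at x₀. Then Σ_{k=1}^d (div_Π f_k)(x₀) · f_k(x₀) = 0 in ℝ^d. -/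
open Matrix

/-- Lemma F.2: for `Π(x) = I - N(x)N(x)ᵀ` with `N(x₀)ᵀN(x₀) = I`, the tangential fields
`f_k(x) = Π(x) e_k` satisfy `∑_k (div_Π f_k)(x₀) · f_k(x₀) = 0`, where
`(div_Π f_k)(x₀) = tr(Π(x₀) · Df_k(x₀)) = ∑_{i,j} Π_{ij}(x₀) ∂_j (f_k)_i (x₀)`. -/
theorem tangential_divergence_field_vanishes
    {d m : ℕ} (N : (Fin d → ℝ) → Matrix (Fin d) (Fin m) ℝ)
    (x₀ : Fin d → ℝ)
    (hdiff : ∀ i j, DifferentiableAt ℝ (fun x => N x i j) x₀)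
    (horth : (N x₀)ᵀ * N x₀ = 1) :
    ∑ k : Fin d,
      (∑ i, ∑ j, ((1 : Matrix (Fin d) (Fin d) ℝ) - N x₀ * (N x₀)ᵀ) i j *
        fderiv ℝ (fun x =>
          ((1 : Matrix (Fin d) (Fin d) ℝ) - N x * (N x)ᵀ).mulVec (Pi.single k 1) i)
          x₀ (Pi.single j 1)) •
      ((1 : Matrix (Fin d) (Fin d) ℝ) - N x₀ * (N x₀)ᵀ).mulVec (Pi.single k 1) = 0 := by
  set P : Matrix (Fin d) (Fin d) ℝ := (1 : Matrix (Fin d) (Fin d) ℝ) - N x₀ * (N x₀)ᵀ with hP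
  set D : Fin d → Fin d → Fin m → ℝ :=
    fun j r a => fderiv ℝ (fun x => N x r a) x₀ (Pi.single j 1) with hDdef
  -- P annihilates N on the left
  have hPN0 : P * N x₀ = 0 := by
    rw [hP, Matrix.sub_mul, Matrix.one_mul, Matrix.mul_assoc, horth, Matrix.mul_one, sub_self]
  have hPN : ∀ l a, ∑ k, P l k * N x₀ k a = 0 := by
    intro l a
    have := congrFun (congrFun hPN0 l) a
    simpa [Matrix.mul_apply] using this
  have hPsymm : ∀ i j, P i j = P j i := by
    have hT : Pᵀ = P := by
      rw [hP]
      simp [Matrix.transpose_sub, Matrix.transpose_mul]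
    intro i j
    conv_lhs => rw [← hT]
    exact Matrix.transpose_apply P i j
  have hNP : ∀ j a, ∑ i, P i j * N x₀ i a = 0 := by
    intro j a
    calc ∑ i, P i j * N x₀ i a = ∑ i, P j i * N x₀ i a :=
          Finset.sum_congr rfl fun i _ => by rw [hPsymm]
    _ = 0 := hPN j a
  -- compute the fderiv
  have hD : ∀ k i j : Fin d,
      fderiv ℝ (fun x =>
          ((1 : Matrix (Fin d) (Fin d) ℝ) - N x * (N x)ᵀ).mulVec (Pi.single k 1) i)
          x₀ (Pi.single j 1)
      = -∑ a, (N x₀ i a * D j k a + N x₀ k a * D j i a) := by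
    intro k i j
    have hfun : (fun x => ((1 : Matrix (Fin d) (Fin d) ℝ) - N x * (N x)ᵀ).mulVec (Pi.single k 1) i)
        = fun x => (1 : Matrix (Fin d) (Fin d) ℝ) i k - ∑ a, N x i a * N x k a := by
      funext x
      simp [Matrix.mulVec_single, Matrix.sub_apply, Matrix.mul_apply, Matrix.transpose_apply]
    rw [hfun, fderiv_const_sub, fderiv_fun_sum (A := fun a x => N x i a * N x k a) (fun a _ => ((hdiff i a).mul (hdiff k a)))]
    simp only [ContinuousLinearMap.neg_apply, ContinuousLinearMap.sum_apply]
    congr 1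
    refine Finset.sum_congr rfl fun a _ => ?_
    rw [fderiv_fun_mul (hdiff i a) (hdiff k a)]
    simp [hDdef, smul_eq_mul]
  -- the divergence coefficient in simplified form
  have key : ∀ k : Fin d,
      (∑ i, ∑ j, P i j * (-∑ a, (N x₀ i a * D j k a + N x₀ k a * D j i a)))
      = -∑ a, (∑ i, ∑ j, P i j * D j i a) * N x₀ k a := by
    intro k
    have e1 : ∀ i j : Fin d, P i j * (-∑ a, (N x₀ i a * D j k a + N x₀ k a * D j i a))
        = -((∑ a, P i j * N x₀ i a * D j k a) + (∑ a, P i j * N x₀ k a * D j i a)) := by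
      intro i j
      rw [mul_neg]
      congr 1
      rw [Finset.mul_sum, ← Finset.sum_add_distrib]
      exact Finset.sum_congr rfl fun a _ => by ring
    have h1 : (∑ i, ∑ j, ∑ a, P i j * N x₀ i a * D j k a) = 0 := by
      rw [Finset.sum_comm]
      refine Finset.sum_eq_zero fun j _ => ?_
      rw [Finset.sum_comm]
      refine Finset.sum_eq_zero fun a _ => ?_
      rw [← Finset.sum_mul, hNP j a, zero_mul]
    have h2 : (∑ i, ∑ j, ∑ a, P i j * N x₀ k a * D j i a)
        = ∑ a, (∑ i, ∑ j, P i j * D j i a) * N x₀ k a := by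
      calc (∑ i, ∑ j, ∑ a, P i j * N x₀ k a * D j i a)
          = ∑ i, ∑ a, ∑ j, P i j * N x₀ k a * D j i a :=
            Finset.sum_congr rfl fun i _ => Finset.sum_comm
        _ = ∑ a, ∑ i, ∑ j, P i j * N x₀ k a * D j i a := Finset.sum_comm
        _ = ∑ a, (∑ i, ∑ j, P i j * D j i a) * N x₀ k a := by
            refine Finset.sum_congr rfl fun a _ => ?_
            rw [Finset.sum_mul]
            refine Finset.sum_congr rfl fun i _ => ?_
            rw [Finset.sum_mul]
            exact Finset.sum_congr rfl fun j _ => by ring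
    calc (∑ i, ∑ j, P i j * (-∑ a, (N x₀ i a * D j k a + N x₀ k a * D j i a)))
        = ∑ i, ∑ j, -((∑ a, P i j * N x₀ i a * D j k a) + (∑ a, P i j * N x₀ k a * D j i a)) := by
          exact Finset.sum_congr rfl fun i _ => Finset.sum_congr rfl fun j _ => e1 i j
      _ = -((∑ i, ∑ j, ∑ a, P i j * N x₀ i a * D j k a)
            + (∑ i, ∑ j, ∑ a, P i j * N x₀ k a * D j i a)) := by
          simp [Finset.sum_add_distrib]
      _ = -∑ a, (∑ i, ∑ j, P i j * D j i a) * N x₀ k a := by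
          rw [h1, h2, zero_add]
  -- finish componentwise
  funext l
  simp only [hD]
  simp only [key]
  simp only [Finset.sum_apply, Pi.smul_apply, smul_eq_mul, Pi.zero_apply, Matrix.mulVec_single,
    mul_one, MulOpposite.op_one, one_smul, Matrix.col_apply]
  calc ∑ k, (-∑ a, (∑ i, ∑ j, P i j * D j i a) * N x₀ k a) * P l k
      = ∑ k, ∑ a, -((∑ i, ∑ j, P i j * D j i a) * (P l k * N x₀ k a)) := by
        refine Finset.sum_congr rfl fun k _ => ?_
        rw [neg_mul, Finset.sum_mul, ← Finset.sum_neg_distrib]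
        exact Finset.sum_congr rfl fun a _ => by ring
    _ = ∑ a, ∑ k, -((∑ i, ∑ j, P i j * D j i a) * (P l k * N x₀ k a)) := Finset.sum_comm
    _ = 0 := by
        refine Finset.sum_eq_zero fun a _ => ?_
        rw [Finset.sum_neg_distrib, ← Finset.mul_sum, hPN l a, mul_zero, neg_zero]
end
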